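/- Let S be a real symmetric k₂×k₂ matrix, k₁ ≥ 1 an integer, p ∈ {1,…,k₂}, and c₁, c₂ nonzero real numbers. Let 𝒮 = I_{k₁} ⊗ S + Σ_{i=1}^{k₁−1} z_i z_iᵀ acting on ℝ^{k₁·k₂}, where z_i = c₁ e_{(i−1)k₂+p} + c₂ e_{i·k₂+1}. If the first entry of every eigenvector of S is nonzero, then for every eigenvalue λ of S: λ is an eigenvalue of 𝒮, the kernel of 𝒮 − λI is one-dimensional, and every eigenvector of 𝒮 corresponding to λ has a nonzero first entry. -/

import Mathlib

open Matrix

/-- The vector `z_i = c₁ e_{(i−1)k₂+p} + c₂ e_{i·k₂+1}` (blocks indexed by `Fin k₁`,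
positions in a block by `Fin k₂`; `i` runs over `1, …, k₁ − 1`). -/
def zvec (k₁ k₂ : ℕ) (p : Fin k₂) (c₁ c₂ : ℝ) (i : Fin (k₁ - 1)) : Fin k₁ × Fin k₂ → ℝ :=
  c₁ • (Pi.single ((⟨i.val, by have := i.isLt; omega⟩ : Fin k₁), p) (1 : ℝ) :
      Fin k₁ × Fin k₂ → ℝ) +
  c₂ • (Pi.single ((⟨i.val + 1, by have := i.isLt; omega⟩ : Fin k₁), (⟨0, p.pos⟩ : Fin k₂)) (1 : ℝ) :
      Fin k₁ × Fin k₂ → ℝ)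

/-- `𝒮 = I_{k₁} ⊗ S + Σ_{i=1}^{k₁−1} z_i z_iᵀ`. -/
def interS (k₁ : ℕ) {k₂ : ℕ} (S : Matrix (Fin k₂) (Fin k₂) ℝ) (p : Fin k₂) (c₁ c₂ : ℝ) :
    Matrix (Fin k₁ × Fin k₂) (Fin k₁ × Fin k₂) ℝ :=
  (Matrix.of fun q r => if q.1 = r.1 then S q.2 r.2 else 0) +
  ∑ i : Fin (k₁ - 1), Matrix.vecMulVec (zvec k₁ k₂ p c₁ c₂ i) (zvec k₁ k₂ p c₁ c₂ i)

lemma zvec_apply (k₁ k₂ : ℕ) (p : Fin k₂) (c₁ c₂ : ℝ) (i : Fin (k₁ - 1)) (q : Fin k₁ × Fin k₂) :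
    zvec k₁ k₂ p c₁ c₂ i q =
      (if q = (⟨i.val, by have := i.isLt; omega⟩, p) then c₁ else 0) +
      (if q = (⟨i.val + 1, by have := i.isLt; omega⟩, ⟨0, p.pos⟩) then c₂ else 0) := by
  simp [zvec, Pi.single_apply]

lemma zvec_dot (k₁ k₂ : ℕ) (p : Fin k₂) (c₁ c₂ : ℝ) (i : Fin (k₁ - 1))
    (u : Fin k₁ × Fin k₂ → ℝ) :
    zvec k₁ k₂ p c₁ c₂ i ⬝ᵥ u =
      c₁ * u (⟨i.val, by have := i.isLt; omega⟩, p) +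
      c₂ * u (⟨i.val + 1, by have := i.isLt; omega⟩, ⟨0, p.pos⟩) := by
  simp only [dotProduct, zvec_apply, add_mul, ite_mul, zero_mul,
    Finset.sum_add_distrib, Finset.sum_ite_eq', Finset.mem_univ, if_true]

lemma interS_mulVec (k₁ k₂ : ℕ) (S : Matrix (Fin k₂) (Fin k₂) ℝ) (p : Fin k₂) (c₁ c₂ : ℝ)
    (u : Fin k₁ × Fin k₂ → ℝ) (j : Fin k₁) (a : Fin k₂) :
    (interS k₁ S p c₁ c₂).mulVec u (j, a) =
      S.mulVec (fun b => u (j, b)) a +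
      ∑ i : Fin (k₁ - 1), (zvec k₁ k₂ p c₁ c₂ i ⬝ᵥ u) * zvec k₁ k₂ p c₁ c₂ i (j, a) := by
  rw [interS, Matrix.add_mulVec]
  simp only [Pi.add_apply]
  congr 1
  · rw [Matrix.mulVec, dotProduct, Fintype.sum_prod_type,
      Matrix.mulVec, dotProduct]
    rw [Finset.sum_eq_single j]
    · simp [Matrix.of_apply]
    · intro b _ hb
      simp [Matrix.of_apply, Ne.symm hb]
    · simp
  · rw [Matrix.mulVec]
    simp only [dotProduct, Matrix.sum_apply, Matrix.vecMulVec_apply, Finset.sum_mul]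
    rw [Finset.sum_comm]
    exact Finset.sum_congr rfl fun i _ => Finset.sum_congr rfl fun r _ => by ring

lemma w_dot_z (k₁ k₂ : ℕ) (p : Fin k₂) (c₁ c₂ : ℝ) (w : Fin k₂ → ℝ)
    (j : Fin k₁) (i : Fin (k₁ - 1)) :
    ∑ a : Fin k₂, w a * zvec k₁ k₂ p c₁ c₂ i (j, a) =
      (if j.val = i.val then c₁ * w p else 0) +
      (if j.val = i.val + 1 then c₂ * w ⟨0, p.pos⟩ else 0) := by
  simp only [zvec_apply, Prod.mk.injEq, mul_add, Finset.sum_add_distrib, mul_ite, mul_zero,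
    ite_and]
  congr 1
  · by_cases hj : j = (⟨i.val, by have := i.isLt; omega⟩ : Fin k₁)
    · have : (j : ℕ) = i.val := by rw [hj]
      simp [hj, this, Finset.sum_ite_eq', mul_comm]
    · have : ¬((j : ℕ) = i.val) := fun hc => hj (Fin.ext hc)
      simp [hj, this]
  · by_cases hj : j = (⟨i.val + 1, by have := i.isLt; omega⟩ : Fin k₁)
    · have : (j : ℕ) = i.val + 1 := by rw [hj]
      simp [hj, this, Finset.sum_ite_eq', mul_comm]
    · have : ¬((j : ℕ) = i.val + 1) := fun hc => hj (Fin.ext hc)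
      simp [hj, this]

theorem stmt_10 (k₁ k₂ : ℕ) (hk₁ : 1 ≤ k₁)
    (S : Matrix (Fin k₂) (Fin k₂) ℝ) (hS : S.IsSymm)
    (p : Fin k₂) (c₁ c₂ : ℝ) (hc₁ : c₁ ≠ 0) (hc₂ : c₂ ≠ 0)
    (h : ∀ v : Fin k₂ → ℝ, v ≠ 0 → (∃ μ : ℝ, S.mulVec v = μ • v) → v ⟨0, p.pos⟩ ≠ 0)
    (lam : ℝ) (hlam : ∃ v : Fin k₂ → ℝ, v ≠ 0 ∧ S.mulVec v = lam • v) :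
    (∃ u : Fin k₁ × Fin k₂ → ℝ, u ≠ 0 ∧ (interS k₁ S p c₁ c₂).mulVec u = lam • u) ∧
    Module.finrank ℝ (LinearMap.ker ((interS k₁ S p c₁ c₂
      - lam • (1 : Matrix (Fin k₁ × Fin k₂) (Fin k₁ × Fin k₂) ℝ)).mulVecLin)) = 1 ∧
    (∀ u : Fin k₁ × Fin k₂ → ℝ, u ≠ 0 → (interS k₁ S p c₁ c₂).mulVec u = lam • u →
      u (⟨0, hk₁⟩, ⟨0, p.pos⟩) ≠ 0) := by
  obtain ⟨w, hwne, hw⟩ := hlam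
  set z0 : Fin k₂ := ⟨0, p.pos⟩ with hz0def
  have hw0 : w z0 ≠ 0 := h w hwne ⟨lam, hw⟩
  -- the λ-eigenspace of S is spanned by w
  have eigS : ∀ v : Fin k₂ → ℝ, S.mulVec v = lam • v → v = (v z0 / w z0) • w := by
    intro v hv
    by_contra hne
    have hv' : S.mulVec (v - (v z0 / w z0) • w) = lam • (v - (v z0 / w z0) • w) := by
      rw [Matrix.mulVec_sub, Matrix.mulVec_smul, hv, hw, smul_sub, smul_comm]
    have hne' : v - (v z0 / w z0) • w ≠ 0 := sub_ne_zero.mpr hne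
    have := h _ hne' ⟨lam, hv'⟩
    apply this
    simp only [Pi.sub_apply, Pi.smul_apply, smul_eq_mul]
    field_simp
    simp
  set r : ℝ := -(c₁ * w p) / (c₂ * w z0) with hrdef
  have hrc : c₂ * r * w z0 = -(c₁ * w p) := by
    rw [hrdef]
    field_simp
  set ust : Fin k₁ × Fin k₂ → ℝ := fun q => r ^ (q.1 : ℕ) * w q.2 with hustdef
  have hustz : ∀ i : Fin (k₁ - 1), zvec k₁ k₂ p c₁ c₂ i ⬝ᵥ ust = 0 := by
    intro i
    rw [zvec_dot]
    show c₁ * (r ^ (i : ℕ) * w p) + c₂ * (r ^ ((i : ℕ) + 1) * w z0) = 0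
    rw [pow_succ]
    linear_combination (r ^ (i : ℕ)) * hrc
  have hust_eig : (interS k₁ S p c₁ c₂).mulVec ust = lam • ust := by
    funext q
    obtain ⟨j, a⟩ := q
    rw [interS_mulVec]
    have hb : (fun b => ust (j, b)) = r ^ (j : ℕ) • w := funext fun b => rfl
    have hblock : S.mulVec (fun b => ust (j, b)) a = lam * ust (j, a) := by
      rw [hb, Matrix.mulVec_smul, hw]
      simp [hustdef, smul_eq_mul]
      ring
    rw [hblock]
    simp [hustz]
  have hustne : ust ≠ 0 := by
    intro h0
    apply hw0
    have := congrFun h0 ((⟨0, hk₁⟩ : Fin k₁), z0)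
    simpa [hustdef] using this
  -- forward direction: any eigenvector is a multiple of ust
  have forward : ∀ u : Fin k₁ × Fin k₂ → ℝ, (interS k₁ S p c₁ c₂).mulVec u = lam • u →
      u = (u (⟨0, hk₁⟩, z0) / w z0) • ust := by
    intro u hu
    have key : ∀ (j : Fin k₁) (a : Fin k₂),
        S.mulVec (fun b => u (j, b)) a +
          ∑ i : Fin (k₁ - 1), (zvec k₁ k₂ p c₁ c₂ i ⬝ᵥ u) * zvec k₁ k₂ p c₁ c₂ i (j, a)
          = lam * u (j, a) := by
      intro j a
      rw [← interS_mulVec, hu]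
      rfl
    -- weighted equation
    have wkey : ∀ j : Fin k₁,
        ∑ i : Fin (k₁ - 1), (zvec k₁ k₂ p c₁ c₂ i ⬝ᵥ u) *
          (∑ a : Fin k₂, w a * zvec k₁ k₂ p c₁ c₂ i (j, a)) = 0 := by
      intro j
      have e0 : ∑ a : Fin k₂, w a * (S.mulVec (fun b => u (j, b)) a +
          ∑ i : Fin (k₁ - 1), (zvec k₁ k₂ p c₁ c₂ i ⬝ᵥ u) * zvec k₁ k₂ p c₁ c₂ i (j, a))
          = ∑ a : Fin k₂, w a * (lam * u (j, a)) :=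
        Finset.sum_congr rfl fun a _ => by rw [key j a]
      have e1 : ∑ a : Fin k₂, w a * (S.mulVec (fun b => u (j, b)) a)
          = ∑ a : Fin k₂, w a * (lam * u (j, a)) := by
        have : w ⬝ᵥ S.mulVec (fun b => u (j, b)) = (lam • w) ⬝ᵥ (fun b => u (j, b)) := by
          rw [Matrix.dotProduct_mulVec, ← Matrix.mulVec_transpose, hS.eq, hw]
        simpa [dotProduct, smul_eq_mul, mul_assoc, mul_left_comm] using this
      simp only [mul_add, Finset.sum_add_distrib, Finset.mul_sum] at e0
      rw [e1] at e0
      calc ∑ i : Fin (k₁ - 1), (zvec k₁ k₂ p c₁ c₂ i ⬝ᵥ u) *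
              (∑ a : Fin k₂, w a * zvec k₁ k₂ p c₁ c₂ i (j, a))
          = ∑ i : Fin (k₁ - 1), ∑ a : Fin k₂,
              w a * ((zvec k₁ k₂ p c₁ c₂ i ⬝ᵥ u) * zvec k₁ k₂ p c₁ c₂ i (j, a)) :=
            Finset.sum_congr rfl fun i _ => by
              rw [Finset.mul_sum]; exact Finset.sum_congr rfl fun a _ => by ring
        _ = ∑ a : Fin k₂, ∑ i : Fin (k₁ - 1),
              w a * ((zvec k₁ k₂ p c₁ c₂ i ⬝ᵥ u) * zvec k₁ k₂ p c₁ c₂ i (j, a)) :=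
            Finset.sum_comm
        _ = 0 := by linarith
    -- all coupling coefficients vanish (downward induction)
    have alpha0 : ∀ i : Fin (k₁ - 1), zvec k₁ k₂ p c₁ c₂ i ⬝ᵥ u = 0 := by
      have main : ∀ n : ℕ, ∀ i : Fin (k₁ - 1), k₁ - 1 - i.val ≤ n →
          zvec k₁ k₂ p c₁ c₂ i ⬝ᵥ u = 0 := by
        intro n
        induction n with
        | zero => intro i hi; exact absurd hi (by have := i.isLt; omega)
        | succ n ih =>
          intro i hi
          have hilt := i.isLt
          have hd := wkey ⟨i.val + 1, by omega⟩
          rw [Finset.sum_eq_single i] at hd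
          · rw [w_dot_z] at hd
            rw [if_neg (by simp only [Fin.val_mk]; omega), if_pos (by simp only [Fin.val_mk]), zero_add] at hd
            rcases mul_eq_zero.mp hd with h1 | h1
            · exact h1
            · exact absurd h1 (mul_ne_zero hc₂ hw0)
          · intro i' _ hne
            by_cases hcase : i'.val = i.val + 1
            · rw [ih i' (by omega), zero_mul]
            · have hvne : i'.val ≠ i.val := fun hc => hne (Fin.ext hc)
              rw [w_dot_z, if_neg (by simp; omega), if_neg (by simp; omega), add_zero, mul_zero]
          · intro hni; exact absurd (Finset.mem_univ i) hni
      intro i; exact main (k₁ - 1) i (by omega)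
    -- each block is an S-eigenvector
    have hblock : ∀ j : Fin k₁, S.mulVec (fun b => u (j, b)) = lam • (fun b => u (j, b)) := by
      intro j; funext a
      have hk := key j a
      simp only [alpha0, zero_mul, Finset.sum_const_zero, add_zero] at hk
      simpa using hk
    set t : Fin k₁ → ℝ := fun j => u (j, z0) / w z0 with htdef
    have hub : ∀ (j : Fin k₁) (b : Fin k₂), u (j, b) = t j * w b := by
      intro j b
      have := congrFun (eigS _ (hblock j)) b
      simpa [htdef] using this
    have hrec : ∀ (m : ℕ) (hm1 : m < k₁ - 1) (hma : m < k₁) (hmb : m + 1 < k₁),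
        t ⟨m + 1, hmb⟩ = r * t ⟨m, hma⟩ := by
      intro m hm1 hma hmb
      have h1 := alpha0 ⟨m, hm1⟩
      rw [zvec_dot] at h1
      simp only at h1
      rw [hub ⟨m, hma⟩ p, hub ⟨m + 1, hmb⟩ z0] at h1
      have hne : c₂ * w z0 ≠ 0 := mul_ne_zero hc₂ hw0
      apply mul_left_cancel₀ hne
      linear_combination h1 - t ⟨m, hma⟩ * hrc
    have hpow : ∀ (m : ℕ) (hm : m < k₁), t ⟨m, hm⟩ = r ^ m * t ⟨0, hk₁⟩ := by
      intro m
      induction m with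
      | zero => intro hm; simp
      | succ n ih =>
        intro hm
        have hma : n < k₁ := by omega
        have hn1 : n < k₁ - 1 := by omega
        rw [hrec n hn1 hma hm, ih hma, pow_succ]
        ring
    funext q
    obtain ⟨j, a⟩ := q
    show u (j, a) = t ⟨0, hk₁⟩ * ust (j, a)
    rw [hub j a, hpow j.val j.isLt]
    show r ^ (j : ℕ) * t ⟨0, hk₁⟩ * w a = t ⟨0, hk₁⟩ * (r ^ (j : ℕ) * w a)
    ring
  -- kernel membership characterization
  have hker_mem : ∀ u : Fin k₁ × Fin k₂ → ℝ,
      u ∈ LinearMap.ker ((interS k₁ S p c₁ c₂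
        - lam • (1 : Matrix (Fin k₁ × Fin k₂) (Fin k₁ × Fin k₂) ℝ)).mulVecLin) ↔
      (interS k₁ S p c₁ c₂).mulVec u = lam • u := by
    intro u
    rw [LinearMap.mem_ker, Matrix.mulVecLin_apply, Matrix.sub_mulVec,
      Matrix.smul_mulVec, Matrix.one_mulVec, sub_eq_zero]
  refine ⟨⟨ust, hustne, hust_eig⟩, ?_, ?_⟩
  · have hker : LinearMap.ker ((interS k₁ S p c₁ c₂
        - lam • (1 : Matrix (Fin k₁ × Fin k₂) (Fin k₁ × Fin k₂) ℝ)).mulVecLin)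
        = Submodule.span ℝ {ust} := by
      apply le_antisymm
      · intro u hu
        rw [hker_mem] at hu
        exact Submodule.mem_span_singleton.mpr ⟨_, (forward u hu).symm⟩
      · rw [Submodule.span_singleton_le_iff_mem, hker_mem]
        exact hust_eig
    rw [hker]
    exact finrank_span_singleton hustne
  · intro u hune hu
    intro h0
    apply hune
    rw [forward u hu]
    rw [show u (⟨0, hk₁⟩, z0) = 0 from h0]
    simp
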